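/- Let A be a hyperbolic linear automorphism of ℝ^d and let F : ℝ^d → ℝ^d be a surjective map. If H₁, H₂ : ℝ^d → ℝ^d satisfy H₁ ∘ F = A ∘ H₁ and H₂ ∘ F = A ∘ H₂, and both H₁ and H₂ are at bounded distance from the identity (i.e. sup_{x ∈ ℝ^d} ‖Hᵢ(x) − x‖ < ∞ for i = 1,2), then H₁ = H₂. -/
import Mathlib

/-- A linear automorphism `A` of `ℝ^d` is hyperbolic if there are `A`-invariant
subspaces `Es` and `Eu` with `Es ⊕ Eu = ℝ^d`, and constants `C > 0`, `λ ∈ (0,1)`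
such that `A` contracts on `Es` and `A⁻¹` contracts on `Eu` at rate `λ`. -/
def IsHyperbolicLinear {d : ℕ}
    (A : EuclideanSpace ℝ (Fin d) ≃ₗ[ℝ] EuclideanSpace ℝ (Fin d)) : Prop :=
  ∃ (Es Eu : Submodule ℝ (EuclideanSpace ℝ (Fin d))) (C lam : ℝ),
    0 < C ∧ 0 < lam ∧ lam < 1 ∧
    Es.map A.toLinearMap = Es ∧
    Eu.map A.toLinearMap = Eu ∧
    IsCompl Es Eu ∧
    (∀ v ∈ Es, ∀ n : ℕ, ‖(A ^ n) v‖ ≤ C * lam ^ n * ‖v‖) ∧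
    (∀ v ∈ Eu, ∀ n : ℕ, ‖(A.symm ^ n) v‖ ≤ C * lam ^ n * ‖v‖)

private lemma symm_pow_apply_pow {d : ℕ}
    (A : EuclideanSpace ℝ (Fin d) ≃ₗ[ℝ] EuclideanSpace ℝ (Fin d))
    (n : ℕ) (v : EuclideanSpace ℝ (Fin d)) : (A.symm ^ n) ((A ^ n) v) = v := by
  induction n generalizing v with
  | zero => simp
  | succ n ih =>
    rw [pow_succ' A.symm, pow_succ A]
    show A.symm ((A.symm ^ n) ((A ^ n) (A v))) = v
    rw [ih, A.symm_apply_apply]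

private lemma pow_apply_symm_pow {d : ℕ}
    (A : EuclideanSpace ℝ (Fin d) ≃ₗ[ℝ] EuclideanSpace ℝ (Fin d))
    (n : ℕ) (v : EuclideanSpace ℝ (Fin d)) : (A ^ n) ((A.symm ^ n) v) = v := by
  induction n generalizing v with
  | zero => simp
  | succ n ih =>
    rw [pow_succ' A, pow_succ A.symm]
    show A ((A ^ n) ((A.symm ^ n) (A.symm v))) = v
    rw [ih, A.apply_symm_apply]

/-- Uniqueness of the semi-conjugacy: if `H₁ ∘ F = A ∘ H₁` and `H₂ ∘ F = A ∘ H₂`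
with `F` surjective and both `H₁`, `H₂` at bounded distance from the identity,
then `H₁ = H₂`. -/
theorem semiconjugacy_unique {d : ℕ}
    (A : EuclideanSpace ℝ (Fin d) ≃ₗ[ℝ] EuclideanSpace ℝ (Fin d))
    (hA : IsHyperbolicLinear A)
    (F : EuclideanSpace ℝ (Fin d) → EuclideanSpace ℝ (Fin d))
    (hF : Function.Surjective F)
    (H₁ H₂ : EuclideanSpace ℝ (Fin d) → EuclideanSpace ℝ (Fin d))
    (hH₁ : ∀ x, H₁ (F x) = A (H₁ x))
    (hH₂ : ∀ x, H₂ (F x) = A (H₂ x))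
    (hb₁ : ∃ M : ℝ, ∀ x, ‖H₁ x - x‖ ≤ M)
    (hb₂ : ∃ M : ℝ, ∀ x, ‖H₂ x - x‖ ≤ M) :
    H₁ = H₂ := by
  obtain ⟨Es, Eu, C, lam, hC, hl0, hl1, hEs, hEu, hcompl, hS, hU⟩ := hA
  obtain ⟨M₁, hM₁⟩ := hb₁
  obtain ⟨M₂, hM₂⟩ := hb₂
  set g : EuclideanSpace ℝ (Fin d) → EuclideanSpace ℝ (Fin d) :=
    fun y => H₁ y - H₂ y with hgdef
  have hg : ∀ y, ‖g y‖ ≤ M₁ + M₂ := by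
    intro y
    have h : g y = (H₁ y - y) - (H₂ y - y) := by simp [hgdef]
    rw [h]
    exact (norm_sub_le _ _).trans (add_le_add (hM₁ y) (hM₂ y))
  -- the semiconjugacy relation for g, iterated
  have hsub : ∀ (y : EuclideanSpace ℝ (Fin d)) (n : ℕ),
      g (F^[n] y) = (A ^ n) (g y) := by
    intro y n
    induction n with
    | zero => simp
    | succ n ih =>
      rw [Function.iterate_succ_apply', pow_succ' A]
      show H₁ (F (F^[n] y)) - H₂ (F (F^[n] y)) = A ((A ^ n) (g y))
      rw [hH₁, hH₂, ← map_sub, ← ih]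
  -- invariance of the subspaces under A and A.symm
  have hEsA : ∀ v ∈ Es, A v ∈ Es := by
    intro v hv
    rw [← hEs]; exact ⟨v, hv, rfl⟩
  have hEuA : ∀ v ∈ Eu, A v ∈ Eu := by
    intro v hv
    rw [← hEu]; exact ⟨v, hv, rfl⟩
  have hEsAs : ∀ v ∈ Es, A.symm v ∈ Es := by
    intro v hv
    rw [← hEs] at hv
    obtain ⟨u, hu, huv⟩ := hv
    have : A.symm v = u := by
      have : v = A u := huv.symm
      rw [this, A.symm_apply_apply]
    rwa [this]
  have hEuAs : ∀ v ∈ Eu, A.symm v ∈ Eu := by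
    intro v hv
    rw [← hEu] at hv
    obtain ⟨u, hu, huv⟩ := hv
    have : A.symm v = u := by
      have : v = A u := huv.symm
      rw [this, A.symm_apply_apply]
    rwa [this]
  have hEuPow : ∀ v ∈ Eu, ∀ n : ℕ, (A ^ n) v ∈ Eu := by
    intro v hv n
    induction n with
    | zero => simpa using hv
    | succ n ih =>
      rw [pow_succ' A]
      exact hEuA _ ih
  have hEsSymmPow : ∀ v ∈ Es, ∀ n : ℕ, (A.symm ^ n) v ∈ Es := by
    intro v hv n
    induction n with
    | zero => simpa using hv
    | succ n ih =>
      rw [pow_succ' A.symm]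
      exact hEsAs _ ih
  funext x
  set w := g x with hw
  -- forward bounds
  have hfwd : ∀ n : ℕ, ‖(A ^ n) w‖ ≤ M₁ + M₂ := by
    intro n
    rw [← hsub x n]
    exact hg _
  -- backward bounds
  have hbwd : ∀ n : ℕ, ‖(A.symm ^ n) w‖ ≤ M₁ + M₂ := by
    intro n
    obtain ⟨y, hy⟩ := (hF.iterate n) x
    have : (A ^ n) (g y) = w := by rw [← hsub y n, hy]
    rw [← this, symm_pow_apply_pow]
    exact hg _
  -- decompose w
  have hwmem : w ∈ Es ⊔ Eu := by
    rw [hcompl.sup_eq_top]; trivial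
  obtain ⟨ws, hws, wu, hwu, hsum⟩ := Submodule.mem_sup.mp hwmem
  have hlamnn : (0:ℝ) ≤ lam := le_of_lt hl0
  have hlampow : ∀ n : ℕ, lam ^ n ≤ 1 := fun n =>
    pow_le_one₀ hlamnn (le_of_lt hl1)
  have hlim : Filter.Tendsto (fun n : ℕ => lam ^ n) Filter.atTop (nhds 0) :=
    tendsto_pow_atTop_nhds_zero_of_lt_one hlamnn hl1
  -- wu = 0
  have hwu0 : wu = 0 := by
    have key : ∀ n : ℕ, ‖wu‖ ≤ C * ((M₁ + M₂) + C * ‖ws‖) * lam ^ n := by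
      intro n
      have h1 : ‖wu‖ ≤ C * lam ^ n * ‖(A ^ n) wu‖ := by
        have := hU ((A ^ n) wu) (hEuPow wu hwu n) n
        rwa [symm_pow_apply_pow] at this
      have h2 : ‖(A ^ n) wu‖ ≤ (M₁ + M₂) + C * ‖ws‖ := by
        have hwu' : wu = w - ws := by rw [← hsum]; abel
        have : (A ^ n) wu = (A ^ n) w - (A ^ n) ws := by rw [hwu', map_sub]
        rw [this]
        refine (norm_sub_le _ _).trans (add_le_add (hfwd n) ?_)
        calc ‖(A ^ n) ws‖ ≤ C * lam ^ n * ‖ws‖ := hS ws hws n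
          _ ≤ C * 1 * ‖ws‖ := by
              apply mul_le_mul_of_nonneg_right _ (norm_nonneg _)
              exact mul_le_mul_of_nonneg_left (hlampow n) (le_of_lt hC)
          _ = C * ‖ws‖ := by ring
      calc ‖wu‖ ≤ C * lam ^ n * ‖(A ^ n) wu‖ := h1
        _ ≤ C * lam ^ n * ((M₁ + M₂) + C * ‖ws‖) := by
            apply mul_le_mul_of_nonneg_left h2
            positivity
        _ = C * ((M₁ + M₂) + C * ‖ws‖) * lam ^ n := by ring
    have hto : Filter.Tendsto (fun n : ℕ => C * ((M₁ + M₂) + C * ‖ws‖) * lam ^ n)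
        Filter.atTop (nhds 0) := by
      have := hlim.const_mul (C * ((M₁ + M₂) + C * ‖ws‖))
      simpa using this
    have : ‖wu‖ ≤ 0 := ge_of_tendsto hto (Filter.Eventually.of_forall key)
    exact norm_le_zero_iff.mp this
  -- ws = 0
  have hws0 : ws = 0 := by
    have key : ∀ n : ℕ, ‖ws‖ ≤ C * ((M₁ + M₂) + C * ‖wu‖) * lam ^ n := by
      intro n
      have h1 : ‖ws‖ ≤ C * lam ^ n * ‖(A.symm ^ n) ws‖ := by
        have := hS ((A.symm ^ n) ws) (hEsSymmPow ws hws n) n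
        rwa [pow_apply_symm_pow] at this
      have h2 : ‖(A.symm ^ n) ws‖ ≤ (M₁ + M₂) + C * ‖wu‖ := by
        have hws' : ws = w - wu := by rw [← hsum]; abel
        have : (A.symm ^ n) ws = (A.symm ^ n) w - (A.symm ^ n) wu := by
          rw [hws', map_sub]
        rw [this]
        refine (norm_sub_le _ _).trans (add_le_add (hbwd n) ?_)
        calc ‖(A.symm ^ n) wu‖ ≤ C * lam ^ n * ‖wu‖ := hU wu hwu n
          _ ≤ C * 1 * ‖wu‖ := by
              apply mul_le_mul_of_nonneg_right _ (norm_nonneg _)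
              exact mul_le_mul_of_nonneg_left (hlampow n) (le_of_lt hC)
          _ = C * ‖wu‖ := by ring
      calc ‖ws‖ ≤ C * lam ^ n * ‖(A.symm ^ n) ws‖ := h1
        _ ≤ C * lam ^ n * ((M₁ + M₂) + C * ‖wu‖) := by
            apply mul_le_mul_of_nonneg_left h2
            positivity
        _ = C * ((M₁ + M₂) + C * ‖wu‖) * lam ^ n := by ring
    have hto : Filter.Tendsto (fun n : ℕ => C * ((M₁ + M₂) + C * ‖wu‖) * lam ^ n)
        Filter.atTop (nhds 0) := by
      have := hlim.const_mul (C * ((M₁ + M₂) + C * ‖wu‖))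
      simpa using this
    have : ‖ws‖ ≤ 0 := ge_of_tendsto hto (Filter.Eventually.of_forall key)
    exact norm_le_zero_iff.mp this
  have hw0 : w = 0 := by rw [← hsum, hws0, hwu0, add_zero]
  have : H₁ x - H₂ x = 0 := hw0
  exact sub_eq_zero.mp this
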